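/- Suppose f_{α,γ}(λ,∂) ∈ ℂ[λ,∂] (α, γ ∈ Δ) satisfies the intermediate-series equation, every f_{α,γ} is nonzero, and q_γ, m_γ ∈ ℂ are the constants with f_{0,γ}(λ,∂) = b(∂ + q_γλ + m_γ). If there exist β₀ ≠ 0 and γ₀ ∈ Δ such that f_{β₀,γ₀} is of Form (III), i.e. f_{β₀,γ₀}(λ,∂) = c(∂ + m_{β₀+γ₀})(∂ + (b/(β₀+b))λ + m_{β₀+γ₀} + φ(β₀)/(β₀+b)) with c ≠ 0, q_{β₀+γ₀} = 0, q_{γ₀} = 1 − β₀/b, then for every α ∈ Δ with α ≠ 0, f_{α,β₀+γ₀} is a nonzero constant polynomial and q_{α+β₀+γ₀} − q_{β₀+γ₀} = α/b + 1. -/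

import Mathlib

/-- Evaluation of a two-variable polynomial `P(λ,∂) ∈ ℂ[λ,∂]` at `λ = l`, `∂ = d`. -/
noncomputable def ev2 (P : MvPolynomial (Fin 2) ℂ) (l d : ℂ) : ℂ :=
  MvPolynomial.eval ![l, d] P

/-- `B(α,β) = (1/b)(φ(α)β − φ(β)α + b(φ(α) − φ(β)))`. -/
noncomputable def Bc (b : ℂ) {Δ : AddSubgroup ℂ} (φ : Δ →+ ℂ) (α β : Δ) : ℂ :=
  (1 / b) * (φ α * (β : ℂ) - φ β * (α : ℂ) + b * (φ α - φ β))

/-- The intermediate-series equation for a family `f_{α,γ}(λ,∂) ∈ ℂ[λ,∂]`: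
`((β+b)λ − (α+b)μ + B(α,β)) f_{α+β,γ}(λ+μ,∂)
  = f_{β,γ}(μ,λ+∂) f_{α,β+γ}(λ,∂) − f_{α,γ}(λ,μ+∂) f_{β,α+γ}(μ,∂)`
for all `α, β, γ ∈ Δ` (an identity in `ℂ[λ,μ,∂]`, stated via evaluation at all complex
points `l, m, d`).  Equivalently, `V = ⊕_{γ∈Δ} ℂ[∂]M_γ` with
`x_α λ M_γ = f_{α,γ}(λ,∂) M_{α+γ}` is a free intermediate series module over
`CL(b,φ)`. -/
def ISE (Δ : AddSubgroup ℂ) (b : ℂ) (φ : Δ →+ ℂ)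
    (f : Δ → Δ → MvPolynomial (Fin 2) ℂ) : Prop :=
  ∀ α β γ : Δ, ∀ l m d : ℂ,
    (((β : ℂ) + b) * l - ((α : ℂ) + b) * m + Bc b φ α β)
        * ev2 (f (α + β) γ) (l + m) d
      = ev2 (f β γ) m (l + d) * ev2 (f α (β + γ)) l d
        - ev2 (f α γ) l (m + d) * ev2 (f β (α + γ)) m d

section Forms

variable {Δ : AddSubgroup ℂ}

/-- Form (I): `f_{β,γ} = c` a nonzero constant, with `β ≠ 0` and
`q_{β+γ} − q_γ = β/b + 1`. -/
def FormI (b : ℂ) (q : Δ → ℂ) (β γ : Δ) (P : MvPolynomial (Fin 2) ℂ) : Prop :=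
  ∃ c : ℂ, c ≠ 0 ∧ (∀ l d : ℂ, ev2 P l d = c) ∧ β ≠ 0 ∧
    q (β + γ) - q γ = (β : ℂ) / b + 1

/-- Form (II): `f_{β,γ}(λ,∂) = c(∂ + (b q_{β+γ}/(β+b))λ + m_{β+γ} + (φ(β)/(β+b))q_{β+γ})`
with `c ≠ 0` and `q_{β+γ} − q_γ = β/b`. -/
def FormII (b : ℂ) (φ : Δ →+ ℂ) (q m : Δ → ℂ) (β γ : Δ)
    (P : MvPolynomial (Fin 2) ℂ) : Prop :=
  ∃ c : ℂ, c ≠ 0 ∧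
    (∀ l d : ℂ, ev2 P l d
      = c * (d + (b * q (β + γ) / ((β : ℂ) + b)) * l + m (β + γ)
          + (φ β / ((β : ℂ) + b)) * q (β + γ))) ∧
    q (β + γ) - q γ = (β : ℂ) / b

/-- Form (III): `f_{β,γ}(λ,∂) = c(∂ + m_{β+γ})(∂ + (b/(β+b))λ + m_{β+γ} + φ(β)/(β+b))`
with `c ≠ 0`, `β ≠ 0`, `q_{β+γ} = 0` and `q_γ = 1 − β/b`. -/
def FormIII (b : ℂ) (φ : Δ →+ ℂ) (q m : Δ → ℂ) (β γ : Δ)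
    (P : MvPolynomial (Fin 2) ℂ) : Prop :=
  ∃ c : ℂ, c ≠ 0 ∧
    (∀ l d : ℂ, ev2 P l d
      = c * (d + m (β + γ))
          * (d + (b / ((β : ℂ) + b)) * l + m (β + γ) + φ β / ((β : ℂ) + b))) ∧
    β ≠ 0 ∧ q (β + γ) = 0 ∧ q γ = 1 - (β : ℂ) / b

/-- Form (IV): `f_{β,γ}(λ,∂) = c((∂ + m_{β+γ})(∂ + ((2β+b)/(β+b))λ + m_{β+γ}
+ ((2β+b)/(2(β+b)))φ(β)) + (β/(β+b))(λ + φ(β)/b)²)` with `c ≠ 0`, `β ≠ 0`,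
`q_{β+γ} = β/b` and `q_γ = 1`. -/
def FormIV (b : ℂ) (φ : Δ →+ ℂ) (q m : Δ → ℂ) (β γ : Δ)
    (P : MvPolynomial (Fin 2) ℂ) : Prop :=
  ∃ c : ℂ, c ≠ 0 ∧
    (∀ l d : ℂ, ev2 P l d
      = c * ((d + m (β + γ))
            * (d + ((2 * (β : ℂ) + b) / ((β : ℂ) + b)) * l + m (β + γ)
                + ((2 * (β : ℂ) + b) / (2 * ((β : ℂ) + b))) * φ β)
          + ((β : ℂ) / ((β : ℂ) + b)) * (l + φ β / b) ^ 2)) ∧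
    β ≠ 0 ∧ q (β + γ) = (β : ℂ) / b ∧ q γ = 1

end Forms

open Polynomial Finset

namespace Stmt17

lemma poly_eq_on_infinite {p q : Polynomial ℂ} {S : Set ℂ} (hS : S.Infinite)
    (h : ∀ x ∈ S, p.eval x = q.eval x) : p = q := by
  have h0 : p - q = 0 := by
    apply Polynomial.eq_zero_of_infinite_isRoot
    apply hS.mono
    intro x hx
    simp only [Set.mem_setOf_eq, IsRoot.def, eval_sub]
    rw [h x hx, sub_self]
  exact sub_eq_zero.mp h0

lemma eval_fun_infinite {p : Polynomial ℂ} (hp : p ≠ 0) : {x : ℂ | p.eval x ≠ 0}.Infinite := by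
  have h1 : {x : ℂ | p.eval x = 0}.Finite := Polynomial.finite_setOf_isRoot hp
  have : {x : ℂ | p.eval x ≠ 0} = {x : ℂ | p.eval x = 0}ᶜ := by ext x; simp
  rw [this]
  exact h1.infinite_compl

lemma ne_one_pt_infinite {p : Polynomial ℂ} (hp : p ≠ 0) (t : ℂ) :
    {x : ℂ | p.eval x ≠ 0 ∧ x ≠ t}.Infinite := by
  have h1 : {x : ℂ | p.eval x = 0}.Finite := Polynomial.finite_setOf_isRoot hp
  have h2 : ({x : ℂ | p.eval x = 0} ∪ {t}).Finite := h1.union (Set.finite_singleton t)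
  have : {x : ℂ | p.eval x ≠ 0 ∧ x ≠ t} = ({x : ℂ | p.eval x = 0} ∪ {t})ᶜ := by
    ext x
    simp only [Set.mem_compl_iff, Set.mem_union, Set.mem_setOf_eq, Set.mem_singleton_iff, not_or]
  rw [this]
  exact h2.infinite_compl

lemma ne_pt_infinite (t : ℂ) : {x : ℂ | x ≠ t}.Infinite := by
  have : {x : ℂ | x ≠ t} = ({t} : Set ℂ)ᶜ := by ext x; simp
  rw [this]
  exact (Set.finite_singleton t).infinite_compl

/-- two affine functions agreeing on an infinite set are equal coefficientwise -/
lemma affine_eq_of_infinite {A B : ℂ} {S : Set ℂ} (hS : S.Infinite)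
    (h : ∀ x ∈ S, A * x + B = 0) : A = 0 ∧ B = 0 := by
  obtain ⟨x, hx, y, hy, hxy⟩ := hS.nontrivial
  have hx' := h x hx
  have hy' := h y hy
  have hA : A = 0 := by
    have : A * (x - y) = 0 := by linear_combination hx' - hy'
    rcases mul_eq_zero.mp this with h' | h'
    · exact h'
    · exact absurd (sub_eq_zero.mp h') hxy
  refine ⟨hA, ?_⟩
  rw [hA] at hx'
  simpa using hx'

/-! ### product of linear factors -/

lemma prod_lin_monic (n : ℕ) (r : ℕ → ℂ) : (∏ j ∈ range n, (X + C (r j))).Monic :=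
  monic_prod_of_monic _ _ (fun j _ => monic_X_add_C (r j))

lemma prod_lin_natDegree (n : ℕ) (r : ℕ → ℂ) :
    (∏ j ∈ range n, (X + C (r j))).natDegree = n := by
  rw [Polynomial.natDegree_prod_of_monic _ _ (fun j _ => monic_X_add_C (r j))]
  simp

lemma prod_lin_coeff_top (n : ℕ) (r : ℕ → ℂ) :
    (∏ j ∈ range n, (X + C (r j))).coeff n = 1 := by
  have h := prod_lin_monic n r
  have h2 := prod_lin_natDegree n r
  have := h.coeff_natDegree
  rwa [h2] at this

lemma mul_lin_coeff (P : Polynomial ℂ) (w : ℂ) (n : ℕ) :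
    (P * (X + C w)).coeff (n+1) = P.coeff n + P.coeff (n+1) * w := by
  rw [mul_add, coeff_add, Polynomial.coeff_mul_X, Polynomial.coeff_mul_C]

lemma prod_lin_coeff_sub (n : ℕ) (r : ℕ → ℂ) :
    (∏ j ∈ range (n+1), (X + C (r j))).coeff n = ∑ j ∈ range (n+1), r j := by
  induction n with
  | zero => simp
  | succ n ih =>
    rw [prod_range_succ, mul_lin_coeff, ih, prod_lin_coeff_top, one_mul]
    exact (sum_range_succ r (n+1)).symm

/-! ### bridge to Polynomial (Polynomial ℂ) -/

noncomputable def toPP (p : MvPolynomial (Fin 2) ℂ) : Polynomial (Polynomial ℂ) :=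
  MvPolynomial.aeval ![Polynomial.C Polynomial.X, Polynomial.X] p

lemma toPP_eval (p : MvPolynomial (Fin 2) ℂ) (l d : ℂ) :
    ((toPP p).map (Polynomial.evalRingHom l)).eval d = ev2 p l d := by
  induction p using MvPolynomial.induction_on with
  | C a => simp [toPP, ev2]
  | add p q hp hq =>
    simp only [toPP, ev2, map_add, Polynomial.map_add, Polynomial.eval_add] at *
    rw [hp, hq]
  | mul_X p i hp =>
    simp only [toPP, ev2, map_mul, Polynomial.map_mul, Polynomial.eval_mul] at *
    rw [hp]
    congr 1
    fin_cases i
    · simp [MvPolynomial.aeval_X]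
    · simp [MvPolynomial.aeval_X]

lemma toPP_ne_zero {p : MvPolynomial (Fin 2) ℂ} (hp : p ≠ 0) : toPP p ≠ 0 := by
  intro h
  apply hp
  apply MvPolynomial.funext (q := 0)
  intro x
  have h2 : MvPolynomial.eval ![x 0, x 1] p = 0 := by
    have h3 := toPP_eval p (x 0) (x 1)
    rw [h] at h3
    simp only [Polynomial.map_zero, Polynomial.eval_zero] at h3
    simpa [ev2] using h3.symm
  have hx : ![x 0, x 1] = x := by
    funext i; fin_cases i <;> simp
  rw [map_zero, ← hx]
  exact h2

lemma evalEval (P : Polynomial (Polynomial ℂ)) (l d : ℂ) :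
    (P.eval (Polynomial.C d)).eval l = (P.map (Polynomial.evalRingHom l)).eval d := by
  induction P using Polynomial.induction_on' with
  | add p q hp hq => simp only [Polynomial.eval_add, Polynomial.map_add] at *; rw [hp, hq]
  | monomial k a =>
    rw [Polynomial.eval_monomial, Polynomial.map_monomial, Polynomial.eval_monomial]
    simp only [Polynomial.eval_mul, Polynomial.eval_pow, Polynomial.eval_C,
      Polynomial.coe_evalRingHom]

/-! ### the shift structure lemma -/

lemma comp_shift_eq_self {u : Polynomial ℂ} {σ : ℂ} (hσ : σ ≠ 0)
    (h : ∀ x : ℂ, u.eval (x + σ) = u.eval x) : u.natDegree = 0 := by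
  have hiter : ∀ j : ℕ, u.eval ((j : ℂ) * σ) = u.eval 0 := by
    intro j
    induction j with
    | zero => simp
    | succ j ih =>
      have := h ((j : ℂ) * σ)
      push_cast
      rw [show ((j : ℂ) + 1) * σ = (j : ℂ) * σ + σ by ring, this, ih]
  have hC : u = C (u.eval 0) := by
    apply poly_eq_on_infinite (S := Set.range (fun j : ℕ => (j : ℂ) * σ))
    · apply Set.infinite_range_of_injective
      intro i j hij
      simp only [mul_eq_mul_right_iff] at hij
      rcases hij with h' | h'
      · exact_mod_cast h'
      · exact absurd h' hσ
    · rintro x ⟨j, rfl⟩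
      rw [hiter j, Polynomial.eval_C]
  rw [hC]
  exact Polynomial.natDegree_C _

lemma shift_struct : ∀ (n : ℕ) (u : Polynomial ℂ) (σ av t : ℂ), u ≠ 0 → u.natDegree = n → σ ≠ 0 →
    (∀ x : ℂ, u.eval (x + σ) * (x + av) = (x + t) * u.eval x) →
    t = av + n * σ ∧
      u = C u.leadingCoeff * ∏ j ∈ range n, (X + C (t - (j + 1) * σ)) := by
  intro n
  induction n using Nat.strong_induction_on with
  | _ n IH =>
  intro u σ av t hu hdeg hσ H
  match n, hdeg, IH with
  | 0, hdeg, IH =>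
    have hC : u = C (u.coeff 0) := Polynomial.eq_C_of_natDegree_eq_zero hdeg
    have hc0 : u.coeff 0 ≠ 0 := by
      intro h'; apply hu; rw [hC, h', map_zero]
    have h0 := H 0
    rw [hC] at h0
    simp only [Polynomial.eval_C, zero_add] at h0
    have hta : t = av := by
      have h1 : u.coeff 0 * (av - t) = 0 := by linear_combination h0
      rcases mul_eq_zero.mp h1 with h' | h'
      · exact absurd h' hc0
      · exact (sub_eq_zero.mp h').symm
    refine ⟨by rw [hta]; push_cast; ring, ?_⟩
    simp only [range_zero, prod_empty, mul_one]
    rw [hC, Polynomial.leadingCoeff_C]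
  | (n'+1), hdeg, IH =>
    have hta : t ≠ av := by
      intro hta
      have hper : ∀ x : ℂ, x ≠ -t → u.eval (x + σ) = u.eval x := by
        intro x hx
        have h' := H x
        rw [← hta] at h'
        have hxt : x + t ≠ 0 := by intro h0; exact hx (by linear_combination h0)
        apply mul_right_cancel₀ hxt
        linear_combination h'
      have hcomp : u.comp (X + C σ) = u := by
        apply poly_eq_on_infinite (S := {x : ℂ | x ≠ -t}) (ne_pt_infinite _)
        intro x hx
        rw [Polynomial.eval_comp]
        simp only [Polynomial.eval_add, Polynomial.eval_X, Polynomial.eval_C]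
        exact hper x hx
      have hdeg0 : u.natDegree = 0 := by
        apply comp_shift_eq_self hσ
        intro x
        have := congrArg (Polynomial.eval x) hcomp
        rwa [Polynomial.eval_comp, Polynomial.eval_add, Polynomial.eval_X, Polynomial.eval_C] at this
      omega
    have hroot : u.eval (σ - t) = 0 := by
      have h' := H (-t)
      have h2 : u.eval (-t + σ) * (-t + av) = 0 := by rw [h']; ring
      rcases mul_eq_zero.mp h2 with h'' | h''
      · rwa [show σ - t = -t + σ by ring]
      · exact absurd (by linear_combination h'' : av = t).symm hta
    obtain ⟨v, hv⟩ := Polynomial.dvd_iff_isRoot.mpr hroot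
    have hXC : (X : Polynomial ℂ) - C (σ - t) = X + C (t - σ) := by
      rw [map_sub, map_sub]; ring
    rw [hXC] at hv
    have hvne : v ≠ 0 := by rintro rfl; rw [mul_zero] at hv; exact hu hv
    have hlin_ne : (X + C (t - σ) : Polynomial ℂ) ≠ 0 := (monic_X_add_C _).ne_zero
    have hdegv : v.natDegree = n' := by
      have h3 := Polynomial.natDegree_mul hlin_ne hvne
      rw [← hv, hdeg, Polynomial.natDegree_X_add_C] at h3
      omega
    have hlcv : v.leadingCoeff = u.leadingCoeff := by
      rw [hv, Polynomial.leadingCoeff_mul, Polynomial.leadingCoeff_X_add_C, one_mul]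
    have Hv : ∀ x : ℂ, v.eval (x + σ) * (x + av) = (x + (t - σ)) * v.eval x := by
      have hfun : ∀ x : ℂ, x ≠ -t → v.eval (x + σ) * (x + av) = (x + (t - σ)) * v.eval x := by
        intro x hx
        have h' := H x
        rw [hv] at h'
        simp only [Polynomial.eval_mul, Polynomial.eval_add, Polynomial.eval_X,
          Polynomial.eval_C] at h'
        have hxt : x + t ≠ 0 := by intro h0; exact hx (by linear_combination h0)
        apply mul_left_cancel₀ hxt
        linear_combination h'
      have hpoly : v.comp (X + C σ) * (X + C av) = (X + C (t - σ)) * v := by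
        apply poly_eq_on_infinite (S := {x : ℂ | x ≠ -t}) (ne_pt_infinite _)
        intro x hx
        simp only [Polynomial.eval_mul, Polynomial.eval_add, Polynomial.eval_X,
          Polynomial.eval_C, Polynomial.eval_comp]
        exact hfun x hx
      intro x
      have h4 := congrArg (Polynomial.eval x) hpoly
      simpa only [Polynomial.eval_mul, Polynomial.eval_add, Polynomial.eval_X,
        Polynomial.eval_C, Polynomial.eval_comp] using h4
    obtain ⟨ht', hv'⟩ := IH n' (by omega) v σ av (t - σ) hvne hdegv hσ Hv
    constructor
    · push_cast; push_cast at ht'; linear_combination ht'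
    · have h5 : u = C v.leadingCoeff *
          ((X + C (t - σ)) * ∏ j ∈ range n', (X + C (t - σ - ((j:ℂ) + 1) * σ))) := by
        conv_lhs => rw [hv, hv']
        rw [mul_left_comm]
      conv_lhs => rw [h5]
      rw [← hlcv]
      congr 1
      rw [Finset.prod_range_succ']
      have h6 : ∀ j ∈ range n',
          (X + C (t - σ - ((j:ℂ) + 1) * σ)) = (X + C (t - ((((j+1):ℕ):ℂ) + 1) * σ)) := by
        intro j _; congr 1; push_cast; ring
      rw [Finset.prod_congr rfl h6]
      have h7 : (X + C (t - (((0:ℕ):ℂ) + 1) * σ) : Polynomial ℂ) = X + C (t - σ) := by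
        congr 1; push_cast; ring
      rw [h7, mul_comm]

/-! ### the main structure lemma for a single pair -/

lemma E_struct (p : MvPolynomial (Fin 2) ℂ) (hp : p ≠ 0)
    (b k K E Q M q m : ℂ) (hb : b ≠ 0) (hk : k ≠ 0) (hbk : k * K = b)
    (HF : ∀ l w d : ℂ, K * (l - (k*w + k*E)) * ev2 p (l+w) d
        = b * ev2 p w (l+d) * (d + Q*l + M) - b*(w+d+q*l+m) * ev2 p w d) :
    ∃ (n : ℕ) (c : ℂ), c ≠ 0 ∧ k * (Q - q) = 1 - n*k ∧
      (n = 0 → ∀ l d, ev2 p l d = c) ∧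
      (n = 2 → (q - 1) * (1 + (q - 2)*k) = 0) := by
  have hK : K ≠ 0 := by
    intro h; rw [h, mul_zero] at hbk; exact hb hbk.symm
  set P2 := toPP p with hP2def
  have hP2 : P2 ≠ 0 := toPP_ne_zero hp
  set n := P2.natDegree with hndef
  set An : Polynomial ℂ := P2.coeff n with hAndef
  have hAn : An ≠ 0 := by
    rw [hAndef, hndef]
    exact Polynomial.leadingCoeff_ne_zero.mpr hP2
  have hF : ∀ l d : ℂ, ev2 p l d = (P2.map (Polynomial.evalRingHom l)).eval d :=
    fun l d => (toPP_eval p l d).symm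
  have hF2 : ∀ l d : ℂ, ev2 p l d = (P2.eval (Polynomial.C d)).eval l :=
    fun l d => by rw [hF, evalEval]
  have hcoeffmap : ∀ (l : ℂ) (j : ℕ),
      (P2.map (Polynomial.evalRingHom l)).coeff j = (P2.coeff j).eval l := by
    intro l j; rw [Polynomial.coeff_map]; rfl
  -- the slice identity
  have Hslice : ∀ w d : ℂ, ev2 p w (d + (k*w + k*E)) * (d + (Q*(k*w+k*E) + M))
      = (d + (w + q*(k*w+k*E) + m)) * ev2 p w d := by
    intro w d
    have h1 := HF (k*w + k*E) w d
    rw [show (k*w + k*E) + d = d + (k*w + k*E) from by ring] at h1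
    rw [show (k*w+k*E) - (k*w + k*E) = 0 from by ring, mul_zero, zero_mul] at h1
    have h2 : b * (ev2 p w (d + (k*w+k*E)) * (d + (Q*(k*w+k*E) + M))
        - (d + (w + q*(k*w+k*E) + m)) * ev2 p w d) = 0 := by linear_combination -h1
    rcases mul_eq_zero.mp h2 with h' | h'
    · exact absurd h' hb
    · exact sub_eq_zero.mp h'
  -- the good set
  set S : Set ℂ := {x : ℂ | An.eval x ≠ 0 ∧ x ≠ -E} with hSdef
  have hSinf : S.Infinite := ne_one_pt_infinite hAn (-E)
  have hsne : ∀ x : ℂ, x ∈ S → k*x + k*E ≠ 0 := by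
    intro x hx h0
    apply hx.2
    have : k * (x + E) = 0 := by linear_combination h0
    rcases mul_eq_zero.mp this with h' | h'
    · exact absurd h' hk
    · linear_combination h'
  -- the per-point structure
  have hshift : ∀ x ∈ S,
      (x + q*(k*x+k*E) + m = (Q*(k*x+k*E) + M) + n * (k*x+k*E)) ∧
      P2.map (Polynomial.evalRingHom x) = Polynomial.C (An.eval x) *
        ∏ j ∈ range n, (X + Polynomial.C ((x + q*(k*x+k*E) + m) - ((j:ℂ)+1)*(k*x+k*E))) := by
    intro x hx
    set u := P2.map (Polynomial.evalRingHom x) with hudef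
    have hcu : u.coeff n = An.eval x := hcoeffmap x n
    have hu0 : u ≠ 0 := by
      intro h
      apply hx.1
      rw [← hcu, h, Polynomial.coeff_zero]
    have hdeg : u.natDegree = n := by
      refine le_antisymm Polynomial.natDegree_map_le ?_
      apply Polynomial.le_natDegree_of_ne_zero
      rw [hcu]; exact hx.1
    have Hu : ∀ y : ℂ, u.eval (y + (k*x+k*E)) * (y + (Q*(k*x+k*E)+M))
        = (y + (x + q*(k*x+k*E) + m)) * u.eval y := by
      intro y
      have h3 := Hslice x y
      rw [hF x (y + (k*x+k*E)), hF x y] at h3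
      exact h3
    obtain ⟨hT, hprod⟩ := shift_struct n u (k*x+k*E) (Q*(k*x+k*E)+M)
      (x + q*(k*x+k*E) + m) hu0 hdeg (hsne x hx) Hu
    have hlc : u.leadingCoeff = An.eval x := by
      have h4 : u.leadingCoeff = u.coeff u.natDegree := rfl
      rw [h4, hdeg, hcu]
    exact ⟨hT, by rw [hprod, hlc]⟩
  -- the linear relations
  have hA0 : 1 + q*k - (Q + (n:ℂ))*k = 0 := by
    have hLz : ∀ x ∈ S, (Polynomial.C (1 + q*k - (Q + (n:ℂ))*k) * X
        + Polynomial.C (q*(k*E) + m - (Q + (n:ℂ))*(k*E) - M)).eval x = (0:Polynomial ℂ).eval x := by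
      intro x hx
      have h5 := (hshift x hx).1
      simp only [Polynomial.eval_add, Polynomial.eval_mul, Polynomial.eval_C, Polynomial.eval_X,
        Polynomial.eval_zero]
      linear_combination h5
    have hL := poly_eq_on_infinite hSinf hLz
    have h0' := congrArg (Polynomial.eval 0) hL
    have h1' := congrArg (Polynomial.eval 1) hL
    simp only [Polynomial.eval_add, Polynomial.eval_mul, Polynomial.eval_C, Polynomial.eval_X,
      Polynomial.eval_zero] at h0' h1'
    linear_combination h1' - h0'
  have hM : M = m - E := by
    have hLz : ∀ x ∈ S, (Polynomial.C (1 + q*k - (Q + (n:ℂ))*k) * X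
        + Polynomial.C (q*(k*E) + m - (Q + (n:ℂ))*(k*E) - M)).eval x = (0:Polynomial ℂ).eval x := by
      intro x hx
      have h5 := (hshift x hx).1
      simp only [Polynomial.eval_add, Polynomial.eval_mul, Polynomial.eval_C, Polynomial.eval_X,
        Polynomial.eval_zero]
      linear_combination h5
    have hL := poly_eq_on_infinite hSinf hLz
    have h0' := congrArg (Polynomial.eval 0) hL
    simp only [Polynomial.eval_add, Polynomial.eval_mul, Polynomial.eval_C, Polynomial.eval_X,
      Polynomial.eval_zero] at h0'
    linear_combination -h0' + E * hA0
  -- global shape with variable leading coefficient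
  have Hshape : ∀ l d : ℂ, ev2 p l d = An.eval l *
      ∏ j ∈ range n, (d + ((l + q*(k*l+k*E) + m) - ((j:ℂ)+1)*(k*l+k*E))) := by
    intro l d
    have hpoly : P2.eval (Polynomial.C d) = An * ∏ j ∈ range n,
        (Polynomial.C (d + q*(k*E) + m - ((j:ℂ)+1)*(k*E))
          + Polynomial.C (1 + q*k - ((j:ℂ)+1)*k) * X) := by
      apply poly_eq_on_infinite hSinf
      intro x hx
      rw [← hF2 x d, hF x d, (hshift x hx).2]
      simp only [Polynomial.eval_mul, Polynomial.eval_prod, Polynomial.eval_add,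
        Polynomial.eval_C, Polynomial.eval_X]
      congr 1
      apply Finset.prod_congr rfl
      intro j _
      ring
    rw [hF2 l d, hpoly]
    simp only [Polynomial.eval_mul, Polynomial.eval_prod, Polynomial.eval_add,
      Polynomial.eval_C, Polynomial.eval_X]
    congr 1
    apply Finset.prod_congr rfl
    intro j _
    ring
  -- leading coefficient is constant
  have hkey : ∀ l w : ℂ, K * (l - (k*w + k*E)) * (An.eval (l+w) - An.eval w) = 0 := by
    intro l w
    rcases Nat.eq_zero_or_pos n with hn0 | hnpos
    · have h := HF l w 0
      simp only [Hshape, hn0, Finset.prod_range_zero, mul_one] at h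
      have hn0' : ((n:ℂ)) = 0 := by rw [hn0]; norm_num
      linear_combination h - An.eval w * l * K * hA0 - An.eval w * l * K * k * hn0'
        - An.eval w * l * (Q - q) * hbk + An.eval w * w * hbk + An.eval w * E * hbk
        + b * An.eval w * hM
    · obtain ⟨n', hn'⟩ : ∃ n', n = n' + 1 := ⟨n - 1, by omega⟩
      have hpid : Polynomial.C (K * (l - (k*w + k*E)) * An.eval (l+w)) *
            ∏ j ∈ range n, (X + Polynomial.C (((l+w) + q*(k*(l+w)+k*E) + m) - ((j:ℂ)+1)*(k*(l+w)+k*E)))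
          = (Polynomial.C (b * An.eval w) *
              ∏ j ∈ range n, (X + Polynomial.C (l + ((w + q*(k*w+k*E) + m) - ((j:ℂ)+1)*(k*w+k*E)))))
              * (X + Polynomial.C (Q*l + M))
            - (Polynomial.C (b * An.eval w) *
              ∏ j ∈ range n, (X + Polynomial.C ((w + q*(k*w+k*E) + m) - ((j:ℂ)+1)*(k*w+k*E))))
              * (X + Polynomial.C (w + q*l + m)) := by
        apply poly_eq_on_infinite (Set.infinite_univ (α := ℂ))
        intro d _
        have h := HF l w d
        simp only [Hshape] at h
        have hB2 : ∏ j ∈ range n, ((l+d) + ((w + q*(k*w+k*E) + m) - ((j:ℂ)+1)*(k*w+k*E)))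
            = ∏ j ∈ range n, (d + (l + ((w + q*(k*w+k*E) + m) - ((j:ℂ)+1)*(k*w+k*E)))) := by
          apply Finset.prod_congr rfl; intro j _; ring
        rw [hB2] at h
        simp only [Polynomial.eval_sub, Polynomial.eval_mul, Polynomial.eval_add,
          Polynomial.eval_C, Polynomial.eval_X, Polynomial.eval_prod]
        linear_combination h
      have hco := congrArg (fun P : Polynomial ℂ => P.coeff n) hpid
      simp only [Polynomial.coeff_sub] at hco
      rw [hn'] at hco
      rw [Polynomial.coeff_C_mul, prod_lin_coeff_top] at hco
      rw [mul_lin_coeff, mul_lin_coeff] at hco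
      rw [Polynomial.coeff_C_mul, Polynomial.coeff_C_mul, Polynomial.coeff_C_mul,
        Polynomial.coeff_C_mul, prod_lin_coeff_top, prod_lin_coeff_top,
        prod_lin_coeff_sub, prod_lin_coeff_sub] at hco
      rw [Finset.sum_add_distrib, Finset.sum_const, Finset.card_range, nsmul_eq_mul] at hco
      have hNcast : ((n'+1:ℕ):ℂ) = (n:ℂ) := by rw [hn']
      rw [hNcast] at hco
      linear_combination hco - An.eval w * l * K * hA0
        - An.eval w * l * ((n:ℂ) + Q - q) * hbk + An.eval w * w * hbk + An.eval w * E * hbk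
        + b * An.eval w * hM
  have hcst : ∀ x : ℂ, An.eval x = An.eval 0 := by
    have h6 : ∀ x : ℂ, x ≠ k*0 + k*E → An.eval x = An.eval 0 := by
      intro x hx
      have h7 := hkey x 0
      rw [add_zero] at h7
      rcases mul_eq_zero.mp h7 with h' | h'
      · rcases mul_eq_zero.mp h' with h'' | h''
        · exact absurd h'' hK
        · exact absurd (by linear_combination h'' : x = k*0 + k*E) hx
      · exact sub_eq_zero.mp h'
    have h8 : An = Polynomial.C (An.eval 0) := by
      apply poly_eq_on_infinite (ne_pt_infinite (k*0+k*E))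
      intro x hx
      rw [Polynomial.eval_C]
      exact h6 x hx
    intro x
    rw [h8]
    simp
  have hc0 : An.eval 0 ≠ 0 := by
    intro h
    apply hAn
    apply poly_eq_on_infinite (Set.infinite_univ (α := ℂ))
    intro x _
    rw [Polynomial.eval_zero, hcst x, h]
  refine ⟨n, An.eval 0, hc0, by linear_combination -hA0, ?_, ?_⟩
  · intro hn0 l d
    have h := Hshape l d
    rw [hn0] at h
    simp only [Finset.prod_range_zero, mul_one] at h
    rw [h, hcst l]
  · intro hn2
    have h2n : ((n:ℂ)) = 2 := by rw [hn2]; norm_num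
    have hQk : Q * k = 1 + q*k - 2*k := by linear_combination -hA0 - k*h2n
    have v1 : ev2 p (1 + -E) (-M) = An.eval 0 * ((1+(q-1)*k)*(1+(q-2)*k)) := by
      rw [Hshape (1 + -E) (-M), hcst (1 + -E), hn2, hM]
      simp only [Finset.prod_range_succ, Finset.prod_range_zero, one_mul,
        Nat.cast_zero, Nat.cast_one]
      ring
    have v2 : ev2 p (-E) (1 + -M) = An.eval 0 := by
      rw [Hshape (-E) (1 + -M), hcst (-E), hn2, hM]
      simp only [Finset.prod_range_succ, Finset.prod_range_zero, one_mul,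
        Nat.cast_zero, Nat.cast_one]
      ring
    have v3 : ev2 p (-E) (-M) = 0 := by
      rw [Hshape (-E) (-M), hcst (-E), hn2, hM]
      simp only [Finset.prod_range_succ, Finset.prod_range_zero, one_mul,
        Nat.cast_zero, Nat.cast_one]
      ring
    have h := HF 1 (-E) (-M)
    rw [show (1:ℂ) + -E = 1 + -E from rfl] at h
    rw [v1, v2, v3] at h
    have h9 : b * An.eval 0 * (k * ((q-1)*(1+(q-2)*k))) = 0 := by
      linear_combination k * h - An.eval 0 * ((1+(q-1)*k)*(1+(q-2)*k)) * hbk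
        + b * An.eval 0 * hQk
    rcases mul_eq_zero.mp h9 with h' | h'
    · rcases mul_eq_zero.mp h' with h'' | h''
      · exact absurd h'' hb
      · exact absurd h'' hc0
    · rcases mul_eq_zero.mp h' with h'' | h''
      · exact absurd h'' hk
      · exact h''

end Stmt17


lemma key_pair (Δ : AddSubgroup ℂ) (b : ℂ) (hb : 2 * b ∉ Δ) (φ : Δ →+ ℂ)
    (f : Δ → Δ → MvPolynomial (Fin 2) ℂ) (hf : ISE Δ b φ f)
    (hnz : ∀ α γ : Δ, f α γ ≠ 0) (q m : Δ → ℂ)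
    (h0 : ∀ γ : Δ, ∀ l d : ℂ, ev2 (f 0 γ) l d = b * (d + q γ * l + m γ))
    (δ γ' : Δ) :
    ∃ (n : ℕ) (c : ℂ), c ≠ 0 ∧
      q (δ + γ') - q γ' = (δ:ℂ)/b + 1 - n ∧
      (n = 0 → ∀ l d : ℂ, ev2 (f δ γ') l d = c) ∧
      (n = 2 → (q γ' - 1) * (1 + (q γ' - 2) * (b/((δ:ℂ)+b))) = 0) := by
  have hb0 : b ≠ 0 := by
    intro h
    apply hb
    rw [h, mul_zero]
    exact zero_mem Δ
  have hden : ((δ:ℂ) + b) ≠ 0 := by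
    intro h
    apply hb
    have h2 : 2*b = ((-δ + -δ : Δ) : ℂ) := by push_cast; linear_combination 2*h
    rw [h2]
    exact SetLike.coe_mem _
  have hBc0 : Bc b φ 0 δ = -φ δ := by
    simp only [Bc, map_zero, ZeroMemClass.coe_zero]
    field_simp
    ring
  have HF : ∀ l w d : ℂ,
      ((δ:ℂ)+b) * (l - ((b/((δ:ℂ)+b))*w + (b/((δ:ℂ)+b))*(φ δ / b))) * ev2 (f δ γ') (l+w) d
      = b * ev2 (f δ γ') w (l+d) * (d + q (δ+γ') * l + m (δ+γ'))
        - b*(w + d + q γ' * l + m γ') * ev2 (f δ γ') w d := by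
    intro l w d
    have HI := hf 0 δ γ' l w d
    rw [zero_add, zero_add] at HI
    rw [h0 (δ+γ') l d, h0 γ' l (w+d), hBc0] at HI
    have hco : ((δ:ℂ)+b) * (l - ((b/((δ:ℂ)+b))*w + (b/((δ:ℂ)+b))*(φ δ / b)))
        = ((δ:ℂ)+b)*l - (((0:Δ):ℂ)+b)*w + (- φ δ) := by
      push_cast
      field_simp
      ring
    rw [hco]
    linear_combination HI
  obtain ⟨n, c, hc, hrel, h0c, h2c⟩ := Stmt17.E_struct (f δ γ') (hnz δ γ') b
    (b/((δ:ℂ)+b)) ((δ:ℂ)+b) (φ δ / b) (q (δ+γ')) (m (δ+γ')) (q γ') (m γ')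
    hb0 (div_ne_zero hb0 hden) (by field_simp) HF
  refine ⟨n, c, hc, ?_, h0c, h2c⟩
  field_simp at hrel ⊢
  linear_combination hrel

/-- With all members nonzero and `f_{0,γ}(λ,∂) = b(∂ + q_γλ + m_γ)`,
if some `f_{β₀,γ₀}` with `β₀ ≠ 0` is of Form (III), then for every `α ≠ 0` the member
`f_{α,β₀+γ₀}` is a nonzero constant polynomial and
`q_{α+β₀+γ₀} − q_{β₀+γ₀} = α/b + 1`. -/
theorem stmt17 (Δ : AddSubgroup ℂ) (hΔinf : (Δ : Set ℂ).Infinite)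
    (b : ℂ) (hb : 2 * b ∉ Δ) (φ : Δ →+ ℂ)
    (f : Δ → Δ → MvPolynomial (Fin 2) ℂ) (hf : ISE Δ b φ f)
    (hnz : ∀ α γ : Δ, f α γ ≠ 0)
    (q m : Δ → ℂ)
    (h0 : ∀ γ : Δ, ∀ l d : ℂ, ev2 (f 0 γ) l d = b * (d + q γ * l + m γ))
    (β₀ γ₀ : Δ) (hβ₀ : β₀ ≠ 0) (hIII : FormIII b φ q m β₀ γ₀ (f β₀ γ₀)) :
    ∀ α : Δ, α ≠ 0 →
      (∃ c : ℂ, c ≠ 0 ∧ ∀ l d : ℂ, ev2 (f α (β₀ + γ₀)) l d = c) ∧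
      q (α + β₀ + γ₀) - q (β₀ + γ₀) = (α : ℂ) / b + 1 := by
  intro α hα
  have hb0 : b ≠ 0 := by
    intro h
    apply hb
    rw [h, mul_zero]
    exact zero_mem Δ
  have hden : ∀ δ : Δ, ((δ:ℂ) + b) ≠ 0 := by
    intro δ h
    apply hb
    have h2 : 2*b = ((-δ + -δ : Δ) : ℂ) := by push_cast; linear_combination 2*h
    rw [h2]
    exact SetLike.coe_mem _
  obtain ⟨c₀, hc₀, hsh₀, hβ₀', hq0, hqγ₀⟩ := hIII
  obtain ⟨n₁, c₁, hc₁, hrel₁, h0c₁, h2c₁⟩ := key_pair Δ b hb φ f hf hnz q m h0 α (β₀ + γ₀)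
  obtain ⟨n₂, c₂, hc₂, hrel₂, -, -⟩ := key_pair Δ b hb φ f hf hnz q m h0 (-α) (α + (β₀ + γ₀))
  have hidx2 : -α + (α + (β₀ + γ₀)) = β₀ + γ₀ := by abel
  rw [hidx2] at hrel₂
  have hsum : n₁ + n₂ = 2 := by
    have hcast : (n₁:ℂ) + (n₂:ℂ) = 2 := by
      push_cast at hrel₁ hrel₂
      linear_combination hrel₁ + hrel₂
    exact_mod_cast hcast
  have hidx : α + β₀ + γ₀ = α + (β₀ + γ₀) := add_assoc _ _ _
  have hcases : n₁ = 0 ∨ n₁ = 1 ∨ n₁ = 2 := by omega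
  rcases hcases with hn | hn | hn
  · -- n₁ = 0 : Form I, done
    refine ⟨⟨c₁, hc₁, h0c₁ hn⟩, ?_⟩
    rw [hidx]
    rw [hn] at hrel₁
    push_cast at hrel₁
    linear_combination hrel₁
  · -- n₁ = 1 : contradiction via the pair (α+β₀, γ₀)
    exfalso
    obtain ⟨n₃, c₃, hc₃, hrel₃, -, h2c₃⟩ := key_pair Δ b hb φ f hf hnz q m h0 (α + β₀) γ₀
    rw [add_assoc] at hrel₃
    rw [hn] at hrel₁
    push_cast at hrel₁ hrel₃
    have hn₃' : n₃ = 2 := by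
      have hn₃ : (n₃:ℂ) = 2 := by linear_combination -hrel₁ + hrel₃ + hqγ₀ - hq0
      exact_mod_cast hn₃
    have h2 := h2c₃ hn₃'
    rcases mul_eq_zero.mp h2 with h' | h'
    · rw [hqγ₀] at h'
      apply hβ₀
      field_simp at h'
      exact ZeroMemClass.coe_eq_zero.mp (by linear_combination -h')
    · rw [hqγ₀] at h'
      apply hα
      have hd := hden (α + β₀)
      push_cast at h' hd
      have hαc : (α:ℂ) = 0 := by
        field_simp at h'
        linear_combination h'
      exact ZeroMemClass.coe_eq_zero.mp hαc
  · -- n₁ = 2 : contradiction via q(β₀+γ₀) = 0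
    exfalso
    have h2 := h2c₁ hn
    rw [hq0] at h2
    have hαb : (α:ℂ) = b := by
      rcases mul_eq_zero.mp h2 with h' | h'
      · norm_num at h'
      · have hd := hden α
        field_simp at h'
        linear_combination h'
    apply hb
    have h3 : 2*b = ((α + α : Δ) : ℂ) := by push_cast; linear_combination -2*hαb
    rw [h3]
    exact SetLike.coe_mem _
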